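/- Let D be a directed graph with every edge labelled by the same fixed nonzero element d of ZMod k. If every cycle of D has effective length 0 mod k, then the underlying graph of D is properly k-vertex-colourable. -/

import Mathlib

open Classical

/-- The underlying simple graph of a digraph given by its set `E` of directed
edges (ordered pairs of distinct vertices). -/
def underlyingGraph {V : Type*} (E : Set (V × V)) : SimpleGraph V :=
  SimpleGraph.fromRel (fun u v => (u, v) ∈ E)

/-- The effective length of a walk in the underlying graph of a digraph with edge
set `E`, with edge weights `w` in an abelian group: forward edges count
positively, backward edges negatively. -/
noncomputable def effLen {V Γ : Type*} [AddCommGroup Γ] (E : Set (V × V)) (w : V × V → Γ)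
    {a b : V} (p : (underlyingGraph E).Walk a b) : Γ :=
  (p.darts.map (fun d =>
    if d.toProd ∈ E then w d.toProd else - w (d.toProd.2, d.toProd.1))).sum

section helpers

open SimpleGraph Walk

variable {V : Type*} {k : ℕ} {d : ZMod k} {E : Set (V × V)}

lemma effLen_nil' {a : V} :
    effLen E (fun _ => d) (Walk.nil : (underlyingGraph E).Walk a a) = 0 := rfl

lemma effLen_cons' {a b c : V} (h : (underlyingGraph E).Adj a b)
    (p : (underlyingGraph E).Walk b c) :
    effLen E (fun _ => d) (Walk.cons h p) =
      (if (a, b) ∈ E then d else -d) + effLen E (fun _ => d) p := by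
  simp [effLen]

lemma effLen_append' {a b c : V} (p : (underlyingGraph E).Walk a b)
    (q : (underlyingGraph E).Walk b c) :
    effLen E (fun _ => d) (p.append q) =
      effLen E (fun _ => d) p + effLen E (fun _ => d) q := by
  simp [effLen, darts_append]

lemma term_add' (hasym : ∀ p ∈ E, (p.2, p.1) ∉ E) {u v : V}
    (h : (underlyingGraph E).Adj u v) :
    (if (u, v) ∈ E then d else -d) + (if (v, u) ∈ E then d else -d) = 0 := by
  rw [underlyingGraph, SimpleGraph.fromRel_adj] at h
  obtain ⟨hne, h | h⟩ := h
  · rw [if_pos h, if_neg (hasym _ h)]; ring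
  · rw [if_neg (hasym _ h), if_pos h]; ring

lemma effLen_reverse' (hasym : ∀ p ∈ E, (p.2, p.1) ∉ E) {a b : V}
    (p : (underlyingGraph E).Walk a b) :
    effLen E (fun _ => d) p.reverse = - effLen E (fun _ => d) p := by
  induction p with
  | nil => simp [effLen]
  | @cons u v w h q ih =>
    rw [reverse_cons, effLen_append', ih, effLen_cons', effLen_cons', effLen_nil']
    have := term_add' (d := d) hasym h
    linear_combination this

end helpers

section closed

open SimpleGraph Walk

variable {V : Type*} {k : ℕ} {d : ZMod k} {E : Set (V × V)}

lemma effLen_closed_zero (hasym : ∀ p ∈ E, (p.2, p.1) ∉ E)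
    (hcyc : ∀ (a : V) (p : (underlyingGraph E).Walk a a), p.IsCycle →
      effLen E (fun _ => d) p = 0) :
    ∀ (n : ℕ) (a : V) (p : (underlyingGraph E).Walk a a), p.length ≤ n →
      effLen E (fun _ => d) p = 0 := by
  intro n
  induction n using Nat.strong_induction_on with
  | _ n ih =>
    intro a p hlen
    cases p with
    | nil => rfl
    | @cons _ c _ h q =>
      by_cases hqp : q.IsPath
      · by_cases he : s(a, c) ∈ q.edges
        · -- q must be the single edge c-a
          cases q with
          | nil => exact absurd rfl h.ne
          | @cons _ x _ h2 q2 =>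
            rw [edges_cons, List.mem_cons] at he
            rcases he with he | he
            · -- s(a,c) = s(c,x), so x = a
              have hx : x = a := by
                rw [Sym2.eq_iff] at he
                rcases he with ⟨h1, h2'⟩ | ⟨h1, _⟩
                · exact absurd h1 h.ne
                · exact h1.symm
              subst hx
              have hq2 : q2 = Walk.nil := by
                have := (Walk.cons_isPath_iff h2 q2).mp hqp
                exact (Walk.isPath_iff_eq_nil (p := q2)).mp this.1
              subst hq2
              rw [effLen_cons', effLen_cons', effLen_nil', add_zero]
              exact term_add' hasym h
            · -- s(a,c) ∈ q2.edges, so c ∈ q2.support, contradicting path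
              exfalso
              have hc : c ∈ q2.support := Walk.snd_mem_support_of_mem_edges q2 he
              have := (Walk.cons_isPath_iff h2 q2).mp hqp
              exact this.2 hc
        · exact hcyc a _ ((Walk.cons_isCycle_iff q h).mpr ⟨hqp, he⟩)
      · -- q has a duplicate vertex; split off a closed subwalk
        rw [Walk.isPath_def] at hqp
        obtain ⟨b, hb2⟩ : ∃ b, 2 ≤ q.support.count b := by
          rcases List.exists_duplicate_iff_not_nodup.mpr hqp with ⟨b, hb⟩
          exact ⟨b, List.duplicate_iff_two_le_count.mp hb⟩
        have hb : b ∈ q.support := List.count_pos_iff.mp (by omega)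
        set q1 := q.takeUntil b hb with hq1
        set qr := q.dropUntil b hb with hqr
        have hspec : q1.append qr = q := q.take_spec hb
        have hcount1 : q1.support.count b = 1 := q.count_support_takeUntil_eq_one hb
        have hcount : q.support.count b = q1.support.count b + qr.support.tail.count b := by
          rw [← hspec, Walk.support_append, List.count_append]
        have hbtail : b ∈ qr.support.tail := by
          apply List.count_pos_iff.mp; omega
        cases hqr' : qr with
        | nil => rw [hqr'] at hbtail; simp at hbtail
        | @cons _ x _ h3 t =>
          rw [hqr'] at hbtail
          simp only [Walk.support_cons, List.tail_cons] at hbtail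
          set tu := t.takeUntil b hbtail with htu
          set s3 := t.dropUntil b hbtail with hs3
          have hspec2 : tu.append s3 = t := t.take_spec hbtail
          -- p = cons h (q1 ++ cons h3 (tu ++ s3))
          -- outer := cons h (q1 ++ s3), inner := cons h3 tu
          have houter : effLen E (fun _ => d) (Walk.cons h (q1.append s3)) = 0 := by
            apply ih (Walk.cons h (q1.append s3)).length _ a _ le_rfl
            · -- length outer < length p ≤ n
              have l1 : q1.length + qr.length = q.length := by
                rw [← hspec]; exact (Walk.length_append _ _).symm
              have l2 : tu.length + s3.length = t.length := by
                rw [← hspec2]; exact (Walk.length_append _ _).symm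
              have l3 : qr.length = t.length + 1 := by rw [hqr']; simp
              have hlp : (Walk.cons h q).length = q.length + 1 := by simp
              have : (Walk.cons h (q1.append s3)).length = q1.length + s3.length + 1 := by
                simp [Walk.length_append]
              omega
          have hinner : effLen E (fun _ => d) (Walk.cons h3 tu) = 0 := by
            apply ih (Walk.cons h3 tu).length _ b _ le_rfl
            · have l1 : q1.length + qr.length = q.length := by
                rw [← hspec]; exact (Walk.length_append _ _).symm
              have l2 : tu.length + s3.length = t.length := by
                rw [← hspec2]; exact (Walk.length_append _ _).symm
              have l3 : qr.length = t.length + 1 := by rw [hqr']; simp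
              have : (Walk.cons h3 tu).length = tu.length + 1 := by simp
              simp only [Walk.length_cons] at hlen
              omega
          have hq' : q = q1.append (Walk.cons h3 (tu.append s3)) := by
            rw [hspec2, ← hqr', hspec]
          rw [effLen_cons', hq', effLen_append', effLen_cons', effLen_append']
          rw [effLen_cons', effLen_append'] at houter
          rw [effLen_cons'] at hinner
          linear_combination houter + hinner

end closed

section mainthm

open SimpleGraph Walk

variable {V : Type*} {k : ℕ} {d : ZMod k} {E : Set (V × V)}

lemma effLen_copy' {a b a' b' : V} (p : (underlyingGraph E).Walk a b)
    (h1 : a = a') (h2 : b = b') :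
    effLen E (fun _ => d) (p.copy h1 h2) = effLen E (fun _ => d) p := by
  subst h1; subst h2; rfl

end mainthm

/-- If every edge of a digraph carries the same nonzero weight `d : ZMod k` and
every cycle of the underlying graph has effective length `0`, then the underlying
graph is properly `k`-vertex-colourable. -/
theorem colourable_of_constant_weight_coflow {V : Type*} (k : ℕ) (hk : 1 ≤ k)
    (d : ZMod k) (hd : d ≠ 0)
    (E : Set (V × V)) (hirr : ∀ p ∈ E, p.1 ≠ p.2)
    (hasym : ∀ p ∈ E, (p.2, p.1) ∉ E)
    (hcyc : ∀ (a : V) (p : (underlyingGraph E).Walk a a), p.IsCycle →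
      effLen E (fun _ => d) p = 0) :
    (underlyingGraph E).Colorable k := by

  haveI : NeZero k := ⟨Nat.one_le_iff_ne_zero.mp hk⟩
  set G := underlyingGraph E with hG
  have hreach : ∀ v : V, G.Reachable ((G.connectedComponentMk v).out) v := by
    intro v
    exact (SimpleGraph.ConnectedComponent.eq).mp ((G.connectedComponentMk v).out_eq)
  set C : V → ZMod k := fun v => effLen E (fun _ => d) (hreach v).some with hC
  have key : ∀ u v : V, G.Adj u v →
      C v = C u + (if (u, v) ∈ E then d else -d) := by
    intro u v huv
    have hcomp : G.connectedComponentMk u = G.connectedComponentMk v :=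
      SimpleGraph.ConnectedComponent.sound huv.reachable
    have hroot : (G.connectedComponentMk u).out = (G.connectedComponentMk v).out := by
      rw [hcomp]
    set pu := (hreach u).some with hpu
    set pv := (hreach v).some with hpv
    have hzero : effLen E (fun _ => d)
        ((pu.append (SimpleGraph.Walk.cons huv pv.reverse)).copy hroot rfl) = 0 :=
      effLen_closed_zero hasym hcyc _ _ _ le_rfl
    rw [effLen_copy', effLen_append', effLen_cons', effLen_reverse' hasym] at hzero
    simp only [hC]
    linear_combination -hzero
  have hne : ∀ u v : V, G.Adj u v → C u ≠ C v := by
    intro u v huv heq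
    have := key u v huv
    rw [← heq] at this
    have ht : (if (u, v) ∈ E then d else -d) = 0 := by linear_combination -this
    by_cases hmem : (u, v) ∈ E
    · rw [if_pos hmem] at ht; exact hd ht
    · rw [if_neg hmem] at ht; exact hd (neg_eq_zero.mp ht)
  have coloring : G.Coloring (ZMod k) := SimpleGraph.Coloring.mk C (fun h => hne _ _ h)
  have := coloring.colorable
  rwa [ZMod.card] at this
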